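/- For every n ≥ 3, every q ∈ ℂ with q ≠ 0, and every 1 ≤ i ≤ n − 2, the operators on V (the span of basis vectors indexed by involutions in ISₙ) satisfy the braid relation T_i T_{i+1} T_i = T_{i+1} T_i T_{i+1} in End_ℂ(V). -/

import Mathlib

open Equiv

/-- The symmetric inverse semigroup `ISₙ`: partial injective maps of `{0, …, n−1}`
(modelled as partial equivalences `Fin n ≃. Fin n`), under composition of partial
maps: `(x * y)(a) = x(y(a))`. -/
abbrev ISn (n : ℕ) : Type := PEquiv (Fin n) (Fin n)

noncomputable instance ISnMonoid (n : ℕ) : Monoid (ISn n) where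
  one := PEquiv.refl (Fin n)
  mul x y := y.trans x
  mul_assoc x y z := (PEquiv.trans_assoc z y x).symm
  one_mul x := PEquiv.trans_refl x
  mul_one x := PEquiv.refl_trans x

@[simp] theorem ISn.mul_def {n : ℕ} (x y : ISn n) : x * y = y.trans x := rfl
@[simp] theorem ISn.one_def {n : ℕ} : (1 : ISn n) = PEquiv.refl (Fin n) := rfl

/-- Involutions in `ISₙ`: elements mapping their domain bijectively to itself with
`w(w(a)) = a` for all `a` in the domain; equivalently, `w.symm = w`. -/
abbrev ISInv (n : ℕ) : Type := {w : ISn n // w.symm = w}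

/-- `V`: the complex vector space with basis `{I_w : w an involution in ISₙ}`. -/
abbrev VIS (n : ℕ) : Type := ISInv n →₀ ℂ

/-- Conjugation `x w x⁻¹` of an involution `w ∈ ISₙ` by an element `x ∈ ISₙ`
(as a partial map, `a ↦ x(w(x⁻¹(a)))`; when `dom(w) ⊆ dom(x)` this is the involution
with domain `x(dom(w))` sending `x(a) ↦ x(w(a))` for `a ∈ dom(w)`). -/
def conjIS {n : ℕ} (x : ISn n) (w : ISInv n) : ISInv n :=
  ⟨(x.symm.trans w.1).trans x, by
    rw [PEquiv.symm_trans_rev, PEquiv.symm_trans_rev, PEquiv.symm_symm, w.2,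
      PEquiv.trans_assoc]⟩

/-- Conjugation `π w π⁻¹` of an involution `w ∈ ISₙ` by a permutation `π ∈ Sₙ`:
the involution with domain `π(dom(w))` sending `π(a) ↦ π(w(a))` for `a ∈ dom(w)`. -/
def conjPermIS {n : ℕ} (π : Equiv.Perm (Fin n)) (w : ISInv n) : ISInv n :=
  conjIS π.toPEquiv w

/-- The operator `T_i` on `V`.  Indices are 0-based: the parameter `i` (with
`i + 1 < n`) corresponds to the pair of points `i, i+1` of `{0, …, n−1}` (that is,
to the 1-based index `i+1` of the paper), and `s_i` is the transposition swapping
them.  On a basis vector `I_w`: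
if `i, i+1 ∈ dom(w)` then `T_i I_w` is `q I_w` if `i, i+1 ∉ supp(w)`; `−I_w` if
`i, i+1 ∈ supp(w)`; `I_{s_i w s_i}` if `i ∈ supp(w)`, `i+1 ∉ supp(w)`;
`q I_{s_i w s_i} + (q−1) I_w` if `i ∉ supp(w)`, `i+1 ∈ supp(w)`.
If `i, i+1 ∉ dom(w)` then `T_i I_w = q I_w`.  If `i ∈ dom(w)`, `i+1 ∉ dom(w)` then
`T_i I_w = I_{s_i w s_i}`.  If `i ∉ dom(w)`, `i+1 ∈ dom(w)` then
`T_i I_w = q I_{s_i w s_i} + (q−1) I_w`. -/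
noncomputable def TIS (n : ℕ) (q : ℂ) (i : ℕ) (hi : i + 1 < n) : VIS n →ₗ[ℂ] VIS n :=
  Finsupp.lift (VIS n) ℂ (ISInv n) (fun w =>
    letI a : Fin n := ⟨i, Nat.lt_of_succ_lt hi⟩
    letI b : Fin n := ⟨i + 1, hi⟩
    letI s : Equiv.Perm (Fin n) := Equiv.swap a b
    if (w.1 a).isSome then
      if (w.1 b).isSome then
        -- both `i` and `i+1` lie in `dom(w)`
        if w.1 a = some a then
          if w.1 b = some b then q • Finsupp.single w (1 : ℂ)
          else q • Finsupp.single (conjPermIS s w) (1 : ℂ) +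
            (q - 1) • Finsupp.single w (1 : ℂ)
        else
          if w.1 b = some b then Finsupp.single (conjPermIS s w) (1 : ℂ)
          else - Finsupp.single w (1 : ℂ)
      else Finsupp.single (conjPermIS s w) (1 : ℂ)
    else
      if (w.1 b).isSome then
        q • Finsupp.single (conjPermIS s w) (1 : ℂ) + (q - 1) • Finsupp.single w (1 : ℂ)
      else q • Finsupp.single w (1 : ℂ))

/-- The operator `P_i` on `V`.  Indices are 0-based: the parameter `i` (with `i < n`)
corresponds to the 1-based index `i+1` of the paper, so that the paper's condition
`dom(w) ⊆ {i+1, …, n}` becomes: every `a ∈ dom(w)` satisfies `i < a`.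
On a basis vector: `P_i I_w = I_w` if `dom(w) ⊆ {i+1, …, n}`, and `P_i I_w = 0`
otherwise. -/
noncomputable def PIS (n : ℕ) (i : ℕ) : VIS n →ₗ[ℂ] VIS n :=
  Finsupp.lift (VIS n) ℂ (ISInv n) (fun w =>
    if ∀ a : Fin n, (w.1 a).isSome → i < (a : ℕ) then Finsupp.single w (1 : ℂ) else 0)

/-- The linear map `C_π : V → V` with `C_π(I_w) = I_{π w π⁻¹}`. -/
noncomputable def CIS (n : ℕ) (π : Equiv.Perm (Fin n)) : VIS n →ₗ[ℂ] VIS n :=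
  Finsupp.lift (VIS n) ℂ (ISInv n) (fun w => Finsupp.single (conjPermIS π w) (1 : ℂ))

section Helpers
variable {n : ℕ}

lemma lift_single {X M : Type*} [AddCommMonoid M] [Module ℂ M] (f : X → M) (w : X) :
    Finsupp.lift M ℂ X f (Finsupp.single w 1) = f w := by
  rw [Finsupp.lift_apply, Finsupp.sum_single_index] <;> simp

lemma conjPermIS_apply (π : Equiv.Perm (Fin n)) (w : ISInv n) (x : Fin n) :
    (conjPermIS π w).1 x = (w.1 (π⁻¹ x)).map π := by
  show ((π.toPEquiv.symm.trans w.1).trans π.toPEquiv) x = _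
  show ((π.toPEquiv.symm x).bind w.1).bind π.toPEquiv = _
  rw [← Equiv.toPEquiv_symm, Equiv.toPEquiv_apply]
  cases h : w.1 (π.symm x) <;> simp [h, Equiv.toPEquiv_apply, Equiv.Perm.inv_def]

lemma conjPermIS_conj (π ρ : Equiv.Perm (Fin n)) (w : ISInv n) :
    conjPermIS π (conjPermIS ρ w) = conjPermIS (π * ρ) w := by
  apply Subtype.ext
  apply PEquiv.ext
  intro x
  show (conjPermIS π (conjPermIS ρ w)).1 x = (conjPermIS (π * ρ) w).1 x
  simp [conjPermIS_apply, Equiv.Perm.mul_apply, mul_inv_rev, Option.map_map, Function.comp_def]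

lemma conjPermIS_one (w : ISInv n) : conjPermIS 1 w = w := by
  apply Subtype.ext
  apply PEquiv.ext
  intro x
  show (conjPermIS 1 w).1 x = w.1 x
  rw [conjPermIS_apply]
  simp [Option.map_id']

lemma status_trichotomy {α : Type*} (o : Option α) (a : α) :
    o = none ∨ o = some a ∨ ∃ x, x ≠ a ∧ o = some x := by
  cases o with
  | none => exact Or.inl rfl
  | some x =>
    rcases eq_or_ne x a with rfl | h
    · exact Or.inr (Or.inl rfl)
    · exact Or.inr (Or.inr ⟨x, h, rfl⟩)

lemma TIS_single (q : ℂ) (i : ℕ) (hi : i + 1 < n) (w : ISInv n) :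
    TIS n q i hi (Finsupp.single w 1) =
    (letI a : Fin n := ⟨i, Nat.lt_of_succ_lt hi⟩
     letI b : Fin n := ⟨i + 1, hi⟩
     letI s : Equiv.Perm (Fin n) := Equiv.swap a b
     if (w.1 a).isSome then
      if (w.1 b).isSome then
        if w.1 a = some a then
          if w.1 b = some b then q • Finsupp.single w (1 : ℂ)
          else q • Finsupp.single (conjPermIS s w) (1 : ℂ) +
            (q - 1) • Finsupp.single w (1 : ℂ)
        else
          if w.1 b = some b then Finsupp.single (conjPermIS s w) (1 : ℂ)
          else - Finsupp.single w (1 : ℂ)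
      else Finsupp.single (conjPermIS s w) (1 : ℂ)
    else
      if (w.1 b).isSome then
        q • Finsupp.single (conjPermIS s w) (1 : ℂ) + (q - 1) • Finsupp.single w (1 : ℂ)
      else q • Finsupp.single w (1 : ℂ)) := lift_single _ _

end Helpers

noncomputable def Tgen (n : ℕ) (q : ℂ) (a b : Fin n) : VIS n →ₗ[ℂ] VIS n :=
  Finsupp.lift (VIS n) ℂ (ISInv n) (fun w =>
    letI s : Equiv.Perm (Fin n) := Equiv.swap a b
    if (w.1 a).isSome then
      if (w.1 b).isSome then
        if w.1 a = some a then
          if w.1 b = some b then q • Finsupp.single w (1 : ℂ)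
          else q • Finsupp.single (conjPermIS s w) (1 : ℂ) +
            (q - 1) • Finsupp.single w (1 : ℂ)
        else
          if w.1 b = some b then Finsupp.single (conjPermIS s w) (1 : ℂ)
          else - Finsupp.single w (1 : ℂ)
      else Finsupp.single (conjPermIS s w) (1 : ℂ)
    else
      if (w.1 b).isSome then
        q • Finsupp.single (conjPermIS s w) (1 : ℂ) + (q - 1) • Finsupp.single w (1 : ℂ)
      else q • Finsupp.single w (1 : ℂ))

lemma Tgen_single (n : ℕ) (q : ℂ) (a b : Fin n) (w : ISInv n) :
    Tgen n q a b (Finsupp.single w 1) =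
    (letI s : Equiv.Perm (Fin n) := Equiv.swap a b
     if (w.1 a).isSome then
      if (w.1 b).isSome then
        if w.1 a = some a then
          if w.1 b = some b then q • Finsupp.single w (1 : ℂ)
          else q • Finsupp.single (conjPermIS s w) (1 : ℂ) +
            (q - 1) • Finsupp.single w (1 : ℂ)
        else
          if w.1 b = some b then Finsupp.single (conjPermIS s w) (1 : ℂ)
          else - Finsupp.single w (1 : ℂ)
      else Finsupp.single (conjPermIS s w) (1 : ℂ)
    else
      if (w.1 b).isSome then
        q • Finsupp.single (conjPermIS s w) (1 : ℂ) + (q - 1) • Finsupp.single w (1 : ℂ)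
      else q • Finsupp.single w (1 : ℂ)) := lift_single _ _

lemma Tgen_single' (n : ℕ) (q : ℂ) (a b : Fin n) (w : ISInv n) (r : ℂ) :
    Tgen n q a b (Finsupp.single w r) =
    r • (letI s : Equiv.Perm (Fin n) := Equiv.swap a b
     if (w.1 a).isSome then
      if (w.1 b).isSome then
        if w.1 a = some a then
          if w.1 b = some b then q • Finsupp.single w (1 : ℂ)
          else q • Finsupp.single (conjPermIS s w) (1 : ℂ) +
            (q - 1) • Finsupp.single w (1 : ℂ)
        else
          if w.1 b = some b then Finsupp.single (conjPermIS s w) (1 : ℂ)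
          else - Finsupp.single w (1 : ℂ)
      else Finsupp.single (conjPermIS s w) (1 : ℂ)
    else
      if (w.1 b).isSome then
        q • Finsupp.single (conjPermIS s w) (1 : ℂ) + (q - 1) • Finsupp.single w (1 : ℂ)
      else q • Finsupp.single w (1 : ℂ)) := by
  have h : (Finsupp.single w r : VIS n) = r • Finsupp.single w 1 := by
    rw [Finsupp.smul_single, smul_eq_mul, mul_one]
  rw [h, map_smul, Tgen_single]

lemma Tgen_braid (n : ℕ) (q : ℂ) (a b c : Fin n) (hab : a ≠ b) (hac : a ≠ c) (hbc : b ≠ c)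
    (w : ISInv n) :
    Tgen n q a b (Tgen n q b c (Tgen n q a b (Finsupp.single w 1))) =
      Tgen n q b c (Tgen n q a b (Tgen n q b c (Finsupp.single w 1))) := by
  have hba := hab.symm
  have hca := hac.symm
  have hcb := hbc.symm
  have hs1 : Equiv.swap a b a = b := Equiv.swap_apply_left a b
  have hs2 : Equiv.swap a b b = a := Equiv.swap_apply_right a b
  have hs3 : Equiv.swap a b c = c := Equiv.swap_apply_of_ne_of_ne hca hcb
  have ht1 : Equiv.swap b c b = c := Equiv.swap_apply_left b c
  have ht2 : Equiv.swap b c c = b := Equiv.swap_apply_right b c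
  have ht3 : Equiv.swap b c a = a := Equiv.swap_apply_of_ne_of_ne hab hac
  have hss : ∀ v : ISInv n,
      conjPermIS (Equiv.swap a b) (conjPermIS (Equiv.swap a b) v) = v := fun v => by
    rw [conjPermIS_conj, Equiv.swap_mul_self, conjPermIS_one]
  have htt : ∀ v : ISInv n,
      conjPermIS (Equiv.swap b c) (conjPermIS (Equiv.swap b c) v) = v := fun v => by
    rw [conjPermIS_conj, Equiv.swap_mul_self, conjPermIS_one]
  have hgrp : Equiv.swap b c * Equiv.swap a b * Equiv.swap b c =
      Equiv.swap a b * Equiv.swap b c * Equiv.swap a b := by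
    rw [Equiv.swap_mul_swap_mul_swap hab hac,
      Equiv.swap_comm a b, Equiv.swap_comm b c,
      Equiv.swap_mul_swap_mul_swap hcb hca, Equiv.swap_comm a c]
  have hbraid : ∀ v : ISInv n,
      conjPermIS (Equiv.swap b c) (conjPermIS (Equiv.swap a b) (conjPermIS (Equiv.swap b c) v)) =
      conjPermIS (Equiv.swap a b) (conjPermIS (Equiv.swap b c) (conjPermIS (Equiv.swap a b) v)) :=
    fun v => by rw [conjPermIS_conj, conjPermIS_conj, conjPermIS_conj, conjPermIS_conj, hgrp]
  rcases status_trichotomy (w.1 a) a with ha | ha | ⟨x, hxa, ha⟩ <;>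
  rcases status_trichotomy (w.1 b) b with hb | hb | ⟨y, hyb, hb⟩ <;>
  rcases status_trichotomy (w.1 c) c with hc | hc | ⟨z, hzc, hc⟩ <;>
  · simp only [Tgen_single', map_add, map_smul, map_neg, conjPermIS_apply, Equiv.swap_inv,
      hs1, hs2, hs3, ht1, ht2, ht3, ha, hb, hc, Option.map_some, Option.map_none,
      Option.isSome_some, Option.isSome_none, Option.some.injEq, Bool.false_eq_true,
      if_true, if_false, Equiv.swap_apply_eq_iff, hss, htt, hbraid,
      smul_add, smul_neg, smul_smul, one_smul, *]
    try module
/-- The braid relation `T_i T_{i+1} T_i = T_{i+1} T_i T_{i+1}` on `V`.  In the 0-based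
indexing used here, the paper's condition `1 ≤ i ≤ n − 2` reads `i + 2 < n`. -/
theorem TIS_braid (n : ℕ) (hn : 3 ≤ n) (q : ℂ) (hq : q ≠ 0) (i : ℕ) (hi : i + 2 < n) :
    (TIS n q i (by omega) : Module.End ℂ (VIS n)) * TIS n q (i + 1) hi * TIS n q i (by omega) =
      (TIS n q (i + 1) hi : Module.End ℂ (VIS n)) * TIS n q i (by omega) *
        TIS n q (i + 1) hi := by
  have h1 : i < n := by omega
  have h2 : i + 1 < n := by omega
  have hab : (⟨i, h1⟩ : Fin n) ≠ ⟨i + 1, h2⟩ := by simp [Fin.ext_iff]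
  have hac : (⟨i, h1⟩ : Fin n) ≠ ⟨i + 2, hi⟩ := by simp [Fin.ext_iff]
  have hbc : (⟨i + 1, h2⟩ : Fin n) ≠ ⟨i + 2, hi⟩ := by simp [Fin.ext_iff]
  have e1 : TIS n q i h2 = Tgen n q ⟨i, h1⟩ ⟨i + 1, h2⟩ := by
    unfold TIS Tgen
    exact congrArg _ (funext fun w => rfl)
  have e2 : TIS n q (i + 1) hi = Tgen n q ⟨i + 1, h2⟩ ⟨i + 2, hi⟩ := by
    unfold TIS Tgen
    exact congrArg _ (funext fun w => rfl)
  rw [e1, e2]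
  apply Finsupp.lhom_ext
  intro w r
  have hr : (Finsupp.single w r : VIS n) = r • Finsupp.single w (1 : ℂ) := by
    rw [Finsupp.smul_single, smul_eq_mul, mul_one]
  simp only [Module.End.mul_apply, hr, map_smul]
  exact congrArg (fun v => r • v)
    (Tgen_braid n q ⟨i, h1⟩ ⟨i + 1, h2⟩ ⟨i + 2, hi⟩ hab hac hbc w)
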